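/- Let (X₁,d₁),…,(Xₙ,dₙ) be finite nonempty metric spaces of diameter at most one, each of cardinality at most N (with N ≥ 2). Fix ε > 0. Then there exist a radius r₀ > 0, a set of indices I ⊆ {1,…,n} with |I| ≥ c·n/(log N)² for an absolute constant c > 0, and points xᵢ ∈ Xᵢ for i ∈ I, such that for every i ∈ I: |Xᵢ ∩ B(xᵢ,r₀)| ≥ (1/4)|Xᵢ|^{1-ε}, and for every x ∈ Xᵢ and every r ≥ 1/|Xᵢ|, |B(x,r) ∩ Xᵢ ∩ B(xᵢ,r₀)| ≤ 8(r/r₀)^ε |Xᵢ ∩ B(xᵢ,r₀)|. -/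

import Mathlib

open Metric Set

private lemma ball_ncard_one_le {X : Type*} [MetricSpace X] [Fintype X]
    (x : X) {r : ℝ} (hr : 0 ≤ r) : 1 ≤ (Metric.closedBall x r).ncard := by
  have h := (Set.ncard_pos (Set.toFinite _)).2 ⟨x, Metric.mem_closedBall_self hr⟩
  omega

private lemma selection (X : Type*) [MetricSpace X] [Fintype X] [Nonempty X]
    (hdiam : Metric.diam (Set.univ : Set X) ≤ 1) (ε : ℝ) (hε : 0 < ε) (hε1 : ε ≤ 1) :
    ∃ j : ℕ, j ≤ Nat.log 2 (Fintype.card X) + 1 ∧ ∃ x : X,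
      (((Metric.closedBall x ((2:ℝ) ^ (-(j:ℝ)))).ncard : ℝ) ≥
        (1/4) * (Fintype.card X : ℝ) ^ ((1:ℝ) - ε)) ∧
      ∀ (y : X) (r : ℝ), 1 / (Fintype.card X : ℝ) ≤ r →
        ((Metric.closedBall y r ∩ Metric.closedBall x ((2:ℝ) ^ (-(j:ℝ)))).ncard : ℝ) ≤
          8 * (r / (2:ℝ) ^ (-(j:ℝ))) ^ ε * ((Metric.closedBall x ((2:ℝ) ^ (-(j:ℝ)))).ncard : ℝ) := by
  classical
  set M := Fintype.card X with hMdef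
  have hM1 : 1 ≤ M := Fintype.card_pos
  have hM1R : (1:ℝ) ≤ (M:ℝ) := by exact_mod_cast hM1
  have hMpos : (0:ℝ) < M := by linarith
  set J := Nat.log 2 M + 1 with hJdef
  have h2J_le : ((2:ℕ) ^ J : ℝ) ≤ 2 * M := by
    have := Nat.pow_log_le_self 2 (show M ≠ 0 by omega)
    have : (2:ℕ) ^ J ≤ 2 * M := by
      rw [hJdef, pow_succ, mul_comm]
      exact Nat.mul_le_mul_left 2 this
    exact_mod_cast this
  -- the function we maximize
  set f : ℕ × X → ℝ := fun p =>
    ((Metric.closedBall p.2 ((2:ℝ) ^ (-(p.1:ℝ)))).ncard : ℝ) * (2:ℝ) ^ (ε * (p.1:ℝ)) with hfdef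
  obtain ⟨p, hpmem, hpmax⟩ := Finset.exists_max_image
    ((Finset.range (J+1)) ×ˢ (Finset.univ : Finset X)) f
    ⟨(0, Classical.arbitrary X), by simp⟩
  obtain ⟨j₀, x₀⟩ := p
  have hj₀ : j₀ ≤ J := by
    have := (Finset.mem_product.1 hpmem).1
    simp only [Finset.mem_range] at this
    omega
  set r₀ : ℝ := (2:ℝ) ^ (-(j₀:ℝ)) with hr₀def
  have hr₀pos : 0 < r₀ := Real.rpow_pos_of_pos two_pos _
  have hr₀le1 : r₀ ≤ 1 := by
    rw [hr₀def]
    calc (2:ℝ) ^ (-(j₀:ℝ)) ≤ (2:ℝ) ^ (0:ℝ) :=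
        Real.rpow_le_rpow_of_exponent_le one_le_two (neg_nonpos.2 (Nat.cast_nonneg _))
    _ = 1 := Real.rpow_zero 2
  set h : ℝ := ((Metric.closedBall x₀ r₀).ncard : ℝ) with hhdef
  have hh1 : (1:ℝ) ≤ h := by
    show (1:ℝ) ≤ ((Metric.closedBall x₀ r₀).ncard : ℝ)
    exact_mod_cast ball_ncard_one_le x₀ hr₀pos.le
  -- ball of radius 1 is everything
  have huniv : ∀ x : X, Metric.closedBall x ((2:ℝ) ^ (-((0:ℕ):ℝ))) = Set.univ := by
    intro x
    ext y
    simp only [Metric.mem_closedBall, Set.mem_univ, iff_true, Nat.cast_zero, neg_zero,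
      Real.rpow_zero]
    exact (Metric.dist_le_diam_of_mem (Set.toFinite _).isBounded (Set.mem_univ y)
      (Set.mem_univ x)).trans hdiam
  have hmax0 : (M:ℝ) ≤ h * (2:ℝ) ^ (ε * (j₀:ℝ)) := by
    have := hpmax (0, x₀) (by simp)
    simp only [hfdef, huniv] at this
    rw [Set.ncard_univ, Nat.card_eq_fintype_card] at this
    simpa [hhdef, hr₀def] using this
  -- condition 1
  have hcond1 : h ≥ (1/4) * (M:ℝ) ^ ((1:ℝ) - ε) := by
    have hw : (2:ℝ) ^ (ε * (j₀:ℝ)) ≤ (2 * M) ^ ε := by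
      calc (2:ℝ) ^ (ε * (j₀:ℝ)) = ((2:ℝ) ^ ((j₀:ℝ))) ^ ε := by
            rw [mul_comm, Real.rpow_mul (by norm_num)]
      _ ≤ ((2:ℝ) ^ ((J:ℝ))) ^ ε := by
            apply Real.rpow_le_rpow (by positivity) _ hε.le
            exact Real.rpow_le_rpow_of_exponent_le one_le_two (by exact_mod_cast hj₀)
      _ ≤ (2 * M) ^ ε := by
            apply Real.rpow_le_rpow (by positivity) _ hε.le
            rw [Real.rpow_natCast]
            exact_mod_cast h2J_le
    have hM2 : (M:ℝ) ≤ h * (2*M) ^ ε := by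
      calc (M:ℝ) ≤ h * (2:ℝ) ^ (ε * (j₀:ℝ)) := hmax0
      _ ≤ h * (2 * M) ^ ε := by
            apply mul_le_mul_of_nonneg_left hw (by linarith)
    have hpow : (2 * (M:ℝ)) ^ ε ≤ 2 * (M:ℝ) ^ ε := by
      rw [Real.mul_rpow (by norm_num) (by positivity)]
      apply mul_le_mul_of_nonneg_right _ (by positivity)
      calc (2:ℝ) ^ ε ≤ (2:ℝ) ^ (1:ℝ) := Real.rpow_le_rpow_of_exponent_le one_le_two hε1
      _ = 2 := Real.rpow_one 2
    have hM3 : (M:ℝ) ≤ h * (2 * (M:ℝ) ^ ε) := by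
      calc (M:ℝ) ≤ h * (2*M)^ε := hM2
      _ ≤ h * (2 * (M:ℝ)^ε) := mul_le_mul_of_nonneg_left hpow (by linarith)
    have hMe : (0:ℝ) < (M:ℝ) ^ ε := Real.rpow_pos_of_pos hMpos _
    have key : (M:ℝ) ^ ((1:ℝ) - ε) ≤ 2 * h := by
      rw [Real.rpow_sub hMpos, Real.rpow_one]
      rw [div_le_iff₀ hMe]
      nlinarith
    linarith
  refine ⟨j₀, by omega, x₀, hcond1, ?_⟩
  intro y r hr
  have hrpos : 0 < r := lt_of_lt_of_le (by positivity) hr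
  have hfin : ((Metric.closedBall y r ∩ Metric.closedBall x₀ r₀).ncard : ℝ) ≤
      ((Metric.closedBall y r).ncard : ℝ) :=
    Nat.cast_le.2 (Set.ncard_le_ncard Set.inter_subset_left (Set.toFinite _))
  rcases le_or_gt r₀ r with hcase | hcase
  · -- easy case: r ≥ r₀
    have h1 : ((Metric.closedBall y r ∩ Metric.closedBall x₀ r₀).ncard : ℝ) ≤ h :=
      Nat.cast_le.2 (Set.ncard_le_ncard Set.inter_subset_right (Set.toFinite _))
    have h2 : (1:ℝ) ≤ (r / r₀) ^ ε := by
      have : (1:ℝ) ≤ r / r₀ := (one_le_div hr₀pos).2 hcase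
      calc (1:ℝ) = (1:ℝ) ^ ε := (Real.one_rpow ε).symm
      _ ≤ (r / r₀) ^ ε := Real.rpow_le_rpow zero_le_one this hε.le
    nlinarith
  · -- main case : r < r₀
    set m := ⌊1/r⌋₊ with hmdef
    have hrle1 : r ≤ 1 := le_of_lt (lt_of_lt_of_le hcase hr₀le1)
    have hm1 : 1 ≤ m := Nat.le_floor (by
      rw [Nat.cast_one, le_div_iff₀ hrpos]; linarith)
    set j' := Nat.log 2 m with hj'def
    have hj'J : j' ≤ J := by
      have hmM : m ≤ M := by
        apply Nat.floor_le_of_le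
        rw [div_le_iff₀ hrpos]
        calc (1:ℝ) = (M:ℝ) * (1/M) := by field_simp
        _ ≤ (M:ℝ) * r := by apply mul_le_mul_of_nonneg_left hr (by positivity)
      calc j' ≤ Nat.log 2 M := Nat.log_mono_right hmM
      _ ≤ J := by omega
    set t : ℝ := (2:ℝ) ^ ((j':ℝ)) with htdef
    have htpos : 0 < t := Real.rpow_pos_of_pos two_pos _
    set s : ℝ := (2:ℝ) ^ (-(j':ℝ)) with hsdef
    have hst : s = t⁻¹ := by rw [hsdef, htdef, Real.rpow_neg (by norm_num)]
    have hspos : 0 < s := Real.rpow_pos_of_pos two_pos _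
    -- r ≤ s
    have ht_le : t ≤ 1/r := by
      rw [htdef, Real.rpow_natCast]
      calc ((2:ℝ) ^ j' : ℝ) ≤ (m:ℝ) := by
            exact_mod_cast Nat.pow_log_le_self 2 (show m ≠ 0 by omega)
      _ ≤ 1/r := Nat.floor_le (by positivity)
    have hrs : r ≤ s := by
      rw [hst]
      have := inv_anti₀ (show (0:ℝ) < t from htpos) ht_le
      simpa using this
    -- s < 2r
    have ht_gt : 1/r < 2 * t := by
      rw [htdef, Real.rpow_natCast]
      calc 1/r < (m:ℝ) + 1 := Nat.lt_floor_add_one _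
      _ ≤ 2 * (2:ℝ) ^ j' := by
            have : m + 1 ≤ 2 ^ (j' + 1) := Nat.lt_pow_succ_log_self one_lt_two m
            have h2 : ((m:ℝ) + 1) ≤ ((2:ℝ) ^ (j'+1)) := by exact_mod_cast this
            calc ((m:ℝ)+1) ≤ (2:ℝ)^(j'+1) := h2
            _ = 2 * (2:ℝ)^j' := by ring
    have hs_lt : s < 2 * r := by
      rw [hst]
      have h1 : (2*t)⁻¹ < (1/r)⁻¹ := inv_strictAnti₀ (by positivity) ht_gt
      rw [one_div, inv_inv] at h1
      have h2 : t⁻¹ = 2 * (2*t)⁻¹ := by field_simp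
      rw [h2]
      linarith
    -- membership and maximality at (j', y)
    have hmem' : ((j', y) : ℕ × X) ∈ (Finset.range (J+1)) ×ˢ (Finset.univ : Finset X) := by
      simp [Finset.mem_range]; omega
    have hmax' := hpmax (j', y) hmem'
    simp only [hfdef] at hmax'
    set A : ℝ := ((Metric.closedBall y s).ncard : ℝ) with hAdef
    have hApos : 0 ≤ A := by positivity
    have hA_le : A * (2:ℝ) ^ (ε * (j':ℝ)) ≤ h * (2:ℝ) ^ (ε * (j₀:ℝ)) := hmax'
    -- LHS ≤ A
    have hsub : ((Metric.closedBall y r ∩ Metric.closedBall x₀ r₀).ncard : ℝ) ≤ A := by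
      have hss : Metric.closedBall y r ∩ Metric.closedBall x₀ r₀ ⊆ Metric.closedBall y s := by
        intro a ha
        exact Metric.closedBall_subset_closedBall hrs ha.1
      exact Nat.cast_le.2 (Set.ncard_le_ncard hss (Set.toFinite _))
    -- key exponent computation
    have hwpos : (0:ℝ) < (2:ℝ) ^ (ε * (j':ℝ)) := Real.rpow_pos_of_pos two_pos _
    have hA2 : A ≤ h * ((2:ℝ) ^ (ε * (j₀:ℝ)) / (2:ℝ) ^ (ε * (j':ℝ))) := by
      have h1 : A ≤ h * (2:ℝ) ^ (ε * (j₀:ℝ)) / (2:ℝ) ^ (ε * (j':ℝ)) :=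
        (le_div_iff₀ hwpos).2 hA_le
      calc A ≤ h * (2:ℝ) ^ (ε * (j₀:ℝ)) / (2:ℝ) ^ (ε * (j':ℝ)) := h1
      _ = h * ((2:ℝ) ^ (ε * (j₀:ℝ)) / (2:ℝ) ^ (ε * (j':ℝ))) := mul_div_assoc _ _ _
    have hquot : (2:ℝ) ^ (ε * (j₀:ℝ)) / (2:ℝ) ^ (ε * (j':ℝ)) ≤ 8 * (r / r₀) ^ ε := by
      have e1 : (2:ℝ) ^ (ε * (j₀:ℝ)) / (2:ℝ) ^ (ε * (j':ℝ)) =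
          ((2:ℝ) ^ ((j₀:ℝ) - (j':ℝ))) ^ ε := by
        rw [← Real.rpow_sub two_pos,
          ← Real.rpow_mul (show (0:ℝ) ≤ 2 by norm_num) ((j₀:ℝ) - (j':ℝ)) ε]
        congr 1
        ring
      have e2 : (2:ℝ) ^ ((j₀:ℝ) - (j':ℝ)) = s / r₀ := by
        rw [hsdef, hr₀def, ← Real.rpow_sub two_pos]
        congr 1
        ring
      have e3 : s / r₀ ≤ 2 * (r / r₀) := by
        rw [← mul_div_assoc]
        have := hs_lt.le
        gcongr
      calc (2:ℝ) ^ (ε * (j₀:ℝ)) / (2:ℝ) ^ (ε * (j':ℝ)) = ((2:ℝ) ^ ((j₀:ℝ) - (j':ℝ))) ^ ε := e1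
      _ = (s / r₀) ^ ε := by rw [e2]
      _ ≤ (2 * (r / r₀)) ^ ε := Real.rpow_le_rpow (by positivity) e3 hε.le
      _ = (2:ℝ) ^ ε * (r / r₀) ^ ε := Real.mul_rpow (by norm_num) (by positivity)
      _ ≤ 2 * (r / r₀) ^ ε := by
          apply mul_le_mul_of_nonneg_right _ (by positivity)
          calc (2:ℝ) ^ ε ≤ (2:ℝ) ^ (1:ℝ) := Real.rpow_le_rpow_of_exponent_le one_le_two hε1
          _ = 2 := Real.rpow_one 2
      _ ≤ 8 * (r / r₀) ^ ε := by
          apply mul_le_mul_of_nonneg_right (by norm_num) (by positivity)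
    calc ((Metric.closedBall y r ∩ Metric.closedBall x₀ r₀).ncard : ℝ) ≤ A := hsub
    _ ≤ h * ((2:ℝ) ^ (ε * (j₀:ℝ)) / (2:ℝ) ^ (ε * (j':ℝ))) := hA2
    _ ≤ h * (8 * (r / r₀) ^ ε) := mul_le_mul_of_nonneg_left hquot (by linarith)
    _ = 8 * (r / r₀) ^ ε * h := by ring

private lemma exists_discrete_radius (X : Type*) [MetricSpace X] [Fintype X] :
    ∃ r : ℝ, 0 < r ∧ ∀ a b : X, dist a b ≤ r → a = b := by
  classical
  by_cases hs : (Finset.univ.filter fun p : X × X => p.1 ≠ p.2).Nonempty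
  · set t := (Finset.univ.filter fun p : X × X => p.1 ≠ p.2).image fun p => dist p.1 p.2
      with htdef
    have ht : t.Nonempty := hs.image _
    have hmin : 0 < t.min' ht := by
      obtain ⟨p, hp, hpe⟩ := Finset.mem_image.1 (t.min'_mem ht)
      have hne : p.1 ≠ p.2 := (Finset.mem_filter.1 hp).2
      rw [← hpe]
      exact dist_pos.2 hne
    refine ⟨t.min' ht / 2, by linarith, ?_⟩
    intro a b hab
    by_contra hne
    have hmem : dist a b ∈ t := Finset.mem_image.2
      ⟨(a, b), Finset.mem_filter.2 ⟨Finset.mem_univ _, hne⟩, rfl⟩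
    have := t.min'_le _ hmem
    linarith
  · refine ⟨1, one_pos, fun a b _ => ?_⟩
    by_contra hne
    exact hs ⟨(a, b), Finset.mem_filter.2 ⟨Finset.mem_univ _, hne⟩⟩

/-- Lemma 2.2 (twoEndsBuildingBlock): given finite nonempty metric spaces `X₁,…,Xₙ` of diameter
at most one and cardinality at most `N`, there is a single radius `r₀`, a set of indices `I`
with `|I| ≳ n / (log N)²`, and points `xᵢ ∈ Xᵢ` so that each ball `B(xᵢ,r₀)` captures at least
`|Xᵢ|^(1-ε)/4` points and satisfies the non-concentration estimate. -/
theorem two_ends_building_block :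
    ∃ c : ℝ, 0 < c ∧
      ∀ (n N : ℕ) (_ : 2 ≤ N) (X : Fin n → Type*)
        (_ : ∀ i, MetricSpace (X i)) (_ : ∀ i, Fintype (X i)) (_ : ∀ i, Nonempty (X i))
        (_ : ∀ i, Metric.diam (Set.univ : Set (X i)) ≤ 1)
        (_ : ∀ i, Fintype.card (X i) ≤ N)
        (ε : ℝ) (_ : 0 < ε),
        ∃ (r₀ : ℝ) (I : Finset (Fin n)) (x : ∀ i, X i),
          0 < r₀ ∧
          (I.card : ℝ) ≥ c * n / (Real.log N) ^ 2 ∧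
          (∀ i ∈ I,
            ((Metric.closedBall (x i) r₀).ncard : ℝ) ≥
              (1/4) * (Fintype.card (X i) : ℝ) ^ ((1:ℝ) - ε)) ∧
          (∀ i ∈ I, ∀ (y : X i) (r : ℝ), 1 / (Fintype.card (X i) : ℝ) ≤ r →
            ((Metric.closedBall y r ∩ Metric.closedBall (x i) r₀).ncard : ℝ) ≤
              8 * (r / r₀) ^ ε * ((Metric.closedBall (x i) r₀).ncard : ℝ)) := by
  classical
  refine ⟨Real.log 2 ^ 2 / 4, by positivity, ?_⟩
  intro n N hN X mI fI neI hdiam hcard ε hε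
  have hlog2 : 0 < Real.log 2 := Real.log_pos one_lt_two
  have hlogN : Real.log 2 ≤ Real.log N :=
    Real.log_le_log two_pos (by exact_mod_cast hN)
  have hlogNpos : 0 < Real.log N := lt_of_lt_of_le hlog2 hlogN
  rcases le_or_gt ε 1 with hε1 | hε1
  · -- main construction via the selection lemma
    choose g hg x hx1 hx2 using fun i => selection (X i) (hdiam i) ε hε hε1
    set K := Nat.log 2 N + 1 with hK
    have hgK : ∀ i ∈ (Finset.univ : Finset (Fin n)), g i ∈ Finset.range (K + 1) := by
      intro i _
      have h1 := hg i
      have h2 : Nat.log 2 (Fintype.card (X i)) ≤ Nat.log 2 N := Nat.log_mono_right (hcard i)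
      simp only [Finset.mem_range]
      omega
    -- pigeonhole
    have hsum : ∑ j ∈ Finset.range (K + 1),
        (((Finset.univ : Finset (Fin n)).filter fun i => g i = j).card : ℝ) = n := by
      rw [← Nat.cast_sum]
      congr 1
      rw [← Finset.card_eq_sum_card_fiberwise hgK, Finset.card_univ, Fintype.card_fin]
    obtain ⟨j₀, hj₀mem, hj₀⟩ := Finset.exists_le_of_sum_le
      (f := fun _ : ℕ => (n : ℝ) / (K + 1))
      (g := fun j => (((Finset.univ : Finset (Fin n)).filter fun i => g i = j).card : ℝ))
      (s := Finset.range (K + 1)) ⟨0, by simp⟩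
      (by
        rw [hsum, Finset.sum_const, Finset.card_range, nsmul_eq_mul]
        have hKne : ((K:ℝ) + 1) ≠ 0 := by positivity
        rw [Nat.cast_add, Nat.cast_one, mul_comm, div_mul_cancel₀ _ hKne])
    set I := (Finset.univ : Finset (Fin n)).filter fun i => g i = j₀ with hI
    refine ⟨(2:ℝ) ^ (-(j₀:ℝ)), I, x, Real.rpow_pos_of_pos two_pos _, ?_, ?_, ?_⟩
    · -- cardinality bound
      have hcard1 : (n : ℝ) / (K + 1) ≤ (I.card : ℝ) := hj₀
      have hKle : (K : ℝ) + 1 ≤ 4 * (Real.log N / Real.log 2) ^ 2 := by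
        have hlogle : (Nat.log 2 N : ℝ) * Real.log 2 ≤ Real.log N := by
          have h1 : (2:ℕ) ^ Nat.log 2 N ≤ N := Nat.pow_log_le_self 2 (by omega)
          have h2 : ((2:ℝ)) ^ (Nat.log 2 N) ≤ (N:ℝ) := by exact_mod_cast h1
          have h3 := Real.log_le_log (by positivity) h2
          rwa [Real.log_pow] at h3
        set L := Real.log N / Real.log 2 with hL
        have hL1 : 1 ≤ L := (one_le_div hlog2).2 hlogN
        have hK2 : (K : ℝ) + 1 = (Nat.log 2 N : ℝ) + 2 := by
          rw [hK]; push_cast; ring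
        have hlogle2 : (Nat.log 2 N : ℝ) ≤ L := by
          rw [hL, le_div_iff₀ hlog2]
          exact hlogle
        nlinarith
      calc ((I.card : ℝ)) ≥ (n : ℝ) / (K + 1) := hcard1
      _ ≥ (n : ℝ) / (4 * (Real.log N / Real.log 2) ^ 2) := by
          apply div_le_div_of_nonneg_left (by positivity) (by positivity) hKle
      _ = Real.log 2 ^ 2 / 4 * n / Real.log N ^ 2 := by
          field_simp
    · intro i hi
      have hgi : g i = j₀ := (Finset.mem_filter.1 hi).2
      rw [← hgi]
      exact hx1 i
    · intro i hi y r hr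
      have hgi : g i = j₀ := (Finset.mem_filter.1 hi).2
      rw [← hgi]
      exact hx2 i y r hr
  · -- trivial construction for ε > 1 : tiny balls are singletons
    rcases Nat.eq_zero_or_pos n with rfl | hn
    · exact ⟨1, ∅, fun i => i.elim0, one_pos, by simp, by simp, by simp⟩
    haveI : Nonempty (Fin n) := Fin.pos_iff_nonempty.1 hn
    choose ρ hρpos hρ using fun i => exists_discrete_radius (X i)
    set r₀ : ℝ := min (1 / (N : ℝ)) ((Finset.univ : Finset (Fin n)).inf' Finset.univ_nonempty ρ)
      with hr₀
    have hr₀pos : 0 < r₀ := by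
      apply lt_min (by positivity)
      rw [Finset.lt_inf'_iff]
      exact fun i _ => hρpos i
    have hr₀leN : r₀ ≤ 1 / (N : ℝ) := min_le_left _ _
    have hr₀leρ : ∀ i, r₀ ≤ ρ i := fun i =>
      (min_le_right _ _).trans (Finset.inf'_le _ (Finset.mem_univ i))
    set x : ∀ i, X i := fun i => Classical.arbitrary (X i) with hx
    have hball : ∀ i (z : X i), Metric.closedBall z r₀ = {z} := by
      intro i z
      apply subset_antisymm
      · intro a ha
        have : dist a z ≤ ρ i := le_trans (Metric.mem_closedBall.1 ha) (hr₀leρ i)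
        exact hρ i a z this
      · intro a ha
        rw [Set.mem_singleton_iff] at ha
        subst ha
        exact Metric.mem_closedBall_self hr₀pos.le
    refine ⟨r₀, Finset.univ, x, hr₀pos, ?_, ?_, ?_⟩
    · rw [Finset.card_univ, Fintype.card_fin]
      rw [ge_iff_le, div_le_iff₀ (by positivity)]
      have h1 : Real.log 2 ^ 2 / 4 ≤ Real.log N ^ 2 := by nlinarith
      nlinarith [Nat.cast_nonneg (α := ℝ) n]
    · intro i _
      rw [hball i (x i), Set.ncard_singleton]
      have hMi1 : (1:ℝ) ≤ (Fintype.card (X i) : ℝ) := by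
        exact_mod_cast (Fintype.card_pos : 0 < Fintype.card (X i))
      have : (Fintype.card (X i) : ℝ) ^ ((1:ℝ) - ε) ≤ 1 :=
        Real.rpow_le_one_of_one_le_of_nonpos hMi1 (by linarith)
      push_cast
      linarith
    · intro i _ y r hr
      have hMi1 : (1:ℝ) ≤ (Fintype.card (X i) : ℝ) := by
        exact_mod_cast (Fintype.card_pos : 0 < Fintype.card (X i))
      have hMiN : (Fintype.card (X i) : ℝ) ≤ N := by exact_mod_cast hcard i
      have hrr : r₀ ≤ r := by
        calc r₀ ≤ 1 / (N:ℝ) := hr₀leN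
        _ ≤ 1 / (Fintype.card (X i) : ℝ) := by
            apply div_le_div_of_nonneg_left one_pos.le (by linarith) hMiN
        _ ≤ r := hr
      have hrpos : 0 < r := lt_of_lt_of_le hr₀pos hrr
      have hone : (1:ℝ) ≤ (r / r₀) ^ ε := by
        have h1 : (1:ℝ) ≤ r / r₀ := (one_le_div hr₀pos).2 hrr
        calc (1:ℝ) = (1:ℝ) ^ ε := (Real.one_rpow ε).symm
        _ ≤ (r / r₀) ^ ε := Real.rpow_le_rpow zero_le_one h1 hε.le
      have hLHS : ((Metric.closedBall y r ∩ Metric.closedBall (x i) r₀).ncard : ℝ) ≤ 1 := by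
        have hsub : Metric.closedBall y r ∩ Metric.closedBall (x i) r₀ ⊆ {x i} := by
          rw [← hball i (x i)]
          exact Set.inter_subset_right
        have := Set.ncard_le_ncard hsub (Set.toFinite _)
        rw [Set.ncard_singleton] at this
        exact_mod_cast this
      have hRHS : ((Metric.closedBall (x i) r₀).ncard : ℝ) = 1 := by
        rw [hball i (x i), Set.ncard_singleton, Nat.cast_one]
      rw [hRHS]
      nlinarith
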